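/- The queue automaton of Figure 5 computes the doubling function: it performs a computation and for every input word w ∈ {a,b}* produces output ww. -/

import Mathlib

/-- A labelled transition system with silent action `τ` modelled as `none`. -/
structure LTS (S A : Type) where
  tr : S → Option A → S → Prop
  fin : S → Prop

/-- Zero or more τ-steps. -/
def LTS.tauStar {S A : Type} (L : LTS S A) : S → S → Prop :=
  Relation.ReflTransGen (fun s t => L.tr s none t)

/-- `s →(a) t` : either `s →a t`, or `a = τ` and `s = t`. -/
def LTS.optStep {S A : Type} (L : LTS S A) (s : S) (a : Option A) (t : S) : Prop :=
  L.tr s a t ∨ (a = none ∧ s = t)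

/-- A symmetric relation `R` is a strong bisimulation. -/
def IsStrongBisim {S A : Type} (L : LTS S A) (R : S → S → Prop) : Prop :=
  (∀ s t, R s t → R t s) ∧
  (∀ s t, R s t →
    (∀ a s', L.tr s a s' → ∃ t', L.tr t a t' ∧ R s' t') ∧
    (L.fin s → L.fin t))

/-- Strong bisimilarity: related by some strong bisimulation. -/
def Bisim {S A : Type} (L : LTS S A) (s t : S) : Prop :=
  ∃ R, IsStrongBisim L R ∧ R s t

/-- A symmetric relation `R` is a branching bisimulation. -/
def IsBranchingBisim {S A : Type} (L : LTS S A) (R : S → S → Prop) : Prop :=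
  (∀ s t, R s t → R t s) ∧
  (∀ s t, R s t →
    (∀ a s', L.tr s a s' →
      ∃ t'' t', L.tauStar t t'' ∧ L.optStep t'' a t' ∧ R s t'' ∧ R s' t') ∧
    (L.fin s → ∃ t', L.tauStar t t' ∧ L.fin t'))

/-- Branching bisimilarity: related by some branching bisimulation. -/
def BBisim {S A : Type} (L : LTS S A) (s t : S) : Prop :=
  ∃ R, IsBranchingBisim L R ∧ R s t

/-- Weak word transitions: τ-steps do not contribute to the word. -/
inductive WStep {S A : Type} (L : LTS S A) : S → List A → S → Prop
  | refl (s : S) : WStep L s [] s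
  | act {s t u : S} {a : A} {w : List A} :
      L.tr s (some a) t → WStep L t w u → WStep L s (a :: w) u
  | tau {s t u : S} {w : List A} :
      L.tr s none t → WStep L t w u → WStep L s w u

/-- The language of a state: words leading to a terminating state. -/
def LTS.lang {S A : Type} (L : LTS S A) (s : S) : Set (List A) :=
  { w | ∃ t, WStep L s w t ∧ L.fin t }

/-- A deterministic LTS. -/
def LTS.Deterministic {S A : Type} (L : LTS S A) : Prop :=
  (∀ s a t u, L.tr s a t → L.tr s a u → t = u) ∧
  (∀ s t, L.tr s none t → ∀ a u, ¬ L.tr s (some a) u)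

/-- The head condition of a queue-automaton transition: `ε`, `*`, or a datum. -/
inductive Head (D : Type) where
  | emp : Head D
  | star : Head D
  | data (d : D) : Head D

/-- A queue automaton. -/
structure QA (S A D : Type) where
  tr : S → Option A → Head D → List D → S → Prop
  init : S
  fin : S → Prop

/-- Effect of a transition with head condition `h` enqueueing `δ` on the queue
contents (head of the queue is the rightmost element, enqueueing prepends). -/
inductive QStep {D : Type} : Head D → List D → List D → List D → Prop
  | emp (δ : List D) : QStep Head.emp δ [] δ
  | data (d : D) (δ ζ : List D) : QStep (Head.data d) δ (ζ ++ [d]) (δ ++ ζ)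
  | star (δ ζ : List D) : QStep Head.star δ ζ (δ ++ ζ)

/-- The process graph of a queue automaton. -/
def QA.proc {S A D : Type} (Q : QA S A D) : LTS (S × List D) A where
  tr := fun c a c' => ∃ h δ, Q.tr c.1 a h δ c'.1 ∧ QStep h δ c.2 c'.2
  fin := fun c => Q.fin c.1

/-- The queue automaton has finitely many transitions. -/
def QA.FiniteTrans {S A D : Type} (Q : QA S A D) : Prop :=
  Set.Finite {x : S × Option A × Head D × List D × S |
    Q.tr x.1 x.2.1 x.2.2.1 x.2.2.2.1 x.2.2.2.2}

inductive AB where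
  | a : AB
  | b : AB

/-- Actions: inputs `i?d`, outputs `o!d`, and `o!ε`. -/
inductive IOAct where
  | inp (d : AB) : IOAct
  | out (d : AB) : IOAct
  | oute : IOAct

/-- Data of the automaton of Figure 5: `a`, `b` and the bookmark `$`. -/
inductive Dd where
  | da : Dd
  | db : Dd
  | dollar : Dd

def ABtoD : AB → Dd
  | AB.a => Dd.da
  | AB.b => Dd.db

inductive StDbl where
  | s0 : StDbl
  | s1 : StDbl
  | s2 : StDbl
  | s3 : StDbl

/-- Transitions of the queue automaton of Figure 5. -/
inductive dblTr : StDbl → Option IOAct → Head Dd → List Dd → StDbl → Prop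
  | read (d : AB) : dblTr StDbl.s0 (some (IOAct.inp d)) Head.star [ABtoD d] StDbl.s0
  | first (d : AB) :
      dblTr StDbl.s0 (some (IOAct.out d)) (Head.data (ABtoD d)) [ABtoD d, Dd.dollar] StDbl.s1
  | empty : dblTr StDbl.s0 (some IOAct.oute) Head.emp [] StDbl.s3
  | recycle (d : AB) :
      dblTr StDbl.s1 (some (IOAct.out d)) (Head.data (ABtoD d)) [ABtoD d] StDbl.s1
  | mark : dblTr StDbl.s1 none (Head.data Dd.dollar) [] StDbl.s2
  | second (d : AB) : dblTr StDbl.s2 (some (IOAct.out d)) (Head.data (ABtoD d)) [] StDbl.s2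
  | done : dblTr StDbl.s2 none Head.emp [] StDbl.s3

/-- The queue automaton of Figure 5. -/
def dblQA : QA StDbl IOAct Dd :=
  { tr := dblTr, init := StDbl.s0, fin := fun s => s = StDbl.s3 }

/-- The input projection of a word of actions. -/
def inProj : List IOAct → List AB :=
  List.filterMap fun x => match x with | IOAct.inp d => some d | _ => none

/-- The output projection of a word of actions. -/
def outProj : List IOAct → List AB :=
  List.filterMap fun x => match x with | IOAct.out d => some d | _ => none
section DblAux

/-! ### Auxiliary lemmas -/

lemma ABtoD_inj {d e : AB} (h : ABtoD d = ABtoD e) : d = e := by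
  cases d <;> cases e <;> simp [ABtoD] at h ⊢

lemma ABtoD_ne_dollar (d : AB) : ABtoD d ≠ Dd.dollar := by
  cases d <;> simp [ABtoD]

lemma qstep_emp {D : Type} {δ q q' : List D} (h : QStep Head.emp δ q q') :
    q = [] ∧ q' = δ := by cases h; exact ⟨rfl, rfl⟩

lemma qstep_star {D : Type} {δ q q' : List D} (h : QStep Head.star δ q q') :
    q' = δ ++ q := by cases h; rfl

lemma qstep_data {D : Type} {d : D} {δ q q' : List D} (h : QStep (Head.data d) δ q q') :
    ∃ ζ, q = ζ ++ [d] ∧ q' = δ ++ ζ := by cases h; exact ⟨_, rfl, rfl⟩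

lemma qstep_det {D : Type} {h : Head D} {δ q q1 q2 : List D}
    (h1 : QStep h δ q q1) (h2 : QStep h δ q q2) : q1 = q2 := by
  cases h1 with
  | emp δ => obtain ⟨_, rfl⟩ := qstep_emp h2; rfl
  | star δ ζ => rw [qstep_star h2]
  | data d δ ζ =>
      obtain ⟨ζ', hq, rfl⟩ := qstep_data h2
      have hz : ζ = ζ' := by simpa using hq
      rw [hz]

lemma last_eq {D : Type} {x y : D} {l m : List D} (h : l ++ [x] = m ++ [y]) : x = y := by
  have h2 := congrArg List.reverse h
  simp at h2
  exact h2.1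

@[simp] lemma inProj_nil : inProj [] = [] := rfl
@[simp] lemma outProj_nil : outProj [] = [] := rfl
@[simp] lemma inProj_cons_inp (d : AB) (l : List IOAct) :
    inProj (IOAct.inp d :: l) = d :: inProj l := rfl
@[simp] lemma inProj_cons_out (d : AB) (l : List IOAct) :
    inProj (IOAct.out d :: l) = inProj l := rfl
@[simp] lemma inProj_cons_oute (l : List IOAct) :
    inProj (IOAct.oute :: l) = inProj l := rfl
@[simp] lemma outProj_cons_inp (d : AB) (l : List IOAct) :
    outProj (IOAct.inp d :: l) = outProj l := rfl
@[simp] lemma outProj_cons_out (d : AB) (l : List IOAct) :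
    outProj (IOAct.out d :: l) = d :: outProj l := rfl
@[simp] lemma outProj_cons_oute (l : List IOAct) :
    outProj (IOAct.oute :: l) = outProj l := rfl
@[simp] lemma inProj_append (l1 l2 : List IOAct) :
    inProj (l1 ++ l2) = inProj l1 ++ inProj l2 := List.filterMap_append
@[simp] lemma outProj_append (l1 l2 : List IOAct) :
    outProj (l1 ++ l2) = outProj l1 ++ outProj l2 := List.filterMap_append
@[simp] lemma inProj_map_inp (w : List AB) : inProj (w.map IOAct.inp) = w := by
  induction w <;> simp [*]
@[simp] lemma inProj_map_out (w : List AB) : inProj (w.map IOAct.out) = [] := by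
  induction w <;> simp [*]
@[simp] lemma outProj_map_out (w : List AB) : outProj (w.map IOAct.out) = w := by
  induction w <;> simp [*]
@[simp] lemma outProj_map_inp (w : List AB) : outProj (w.map IOAct.inp) = [] := by
  induction w <;> simp [*]

lemma fin_iff (c : StDbl × List Dd) : dblQA.proc.fin c ↔ c.1 = StDbl.s3 := Iff.rfl

end DblAux
lemma sound3 : ∀ {c : StDbl × List Dd} {word : List IOAct} {t : StDbl × List Dd},
    WStep dblQA.proc c word t → c.1 = StDbl.s3 → word = [] := by
  intro c word t h
  induction h with
  | refl s => intro _; rfl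
  | act htr h2 ih =>
      rename_i s t u a w
      intro hs
      obtain ⟨s1, q⟩ := s
      simp only at hs
      subst hs
      obtain ⟨h, δ, hd, hq⟩ := htr
      cases hd
  | tau htr h2 ih =>
      rename_i s t u w
      intro hs
      obtain ⟨s1, q⟩ := s
      simp only at hs
      subst hs
      obtain ⟨h, δ, hd, hq⟩ := htr
      cases hd

lemma sound2 : ∀ {c : StDbl × List Dd} {word : List IOAct} {t : StDbl × List Dd},
    WStep dblQA.proc c word t → dblQA.proc.fin t →
    ∀ u : List AB, c = (StDbl.s2, (u.map ABtoD).reverse) → word = u.map IOAct.out := by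
  intro c word t h
  induction h with
  | refl s =>
      intro hfin u hc
      subst hc
      exact absurd ((fin_iff _).1 hfin) (by simp)
  | act htr h2 ih =>
      rename_i s t u a w
      intro hfin u0 hs
      subst hs
      obtain ⟨t1, t2⟩ := t
      obtain ⟨h, δ, hd, hq⟩ := htr
      cases hd with
      | second d =>
          obtain ⟨ζ, hqq, hq2⟩ := qstep_data hq
          have hrev := congrArg List.reverse hqq
          simp at hrev
          cases u0 with
          | nil => simp at hrev
          | cons e u1 =>
            simp at hrev
            obtain ⟨he, hz⟩ := hrev
            have hed : e = d := ABtoD_inj he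
            subst hed
            have hz' : ζ = (u1.map ABtoD).reverse := by
              have := congrArg List.reverse hz; simpa using this.symm
            subst hz'
            have ht2 : t2 = (u1.map ABtoD).reverse := by simpa using hq2
            subst ht2
            have := ih hfin u1 rfl
            simp [this]
  | tau htr h2 ih =>
      rename_i s t u w
      intro hfin u0 hs
      subst hs
      obtain ⟨t1, t2⟩ := t
      obtain ⟨h, δ, hd, hq⟩ := htr
      cases hd with
      | done =>
          obtain ⟨hqq, _⟩ := qstep_emp hq
          have hu : u0 = [] := by
            cases u0 with
            | nil => rfl
            | cons e u1 => simp at hqq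
          subst hu
          exact sound3 h2 rfl
lemma sound1 : ∀ {c : StDbl × List Dd} {word : List IOAct} {t : StDbl × List Dd},
    WStep dblQA.proc c word t → dblQA.proc.fin t →
    ∀ p u : List AB,
      c = (StDbl.s1, (p.map ABtoD).reverse ++ Dd.dollar :: (u.map ABtoD).reverse) →
      word = (u ++ p ++ u).map IOAct.out := by
  intro c word t h
  induction h with
  | refl s =>
      intro hfin p u hc
      subst hc
      exact absurd ((fin_iff _).1 hfin) (by simp)
  | act htr h2 ih =>
      rename_i s t u a w
      intro hfin p u0 hs
      subst hs
      obtain ⟨t1, t2⟩ := t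
      obtain ⟨h, δ, hd, hq⟩ := htr
      cases hd with
      | recycle d =>
          obtain ⟨ζ, hqq, hq2⟩ := qstep_data hq
          have hrev := congrArg List.reverse hqq
          simp at hrev
          cases u0 with
          | nil =>
            simp only [List.map_nil, List.nil_append, List.cons.injEq] at hrev
            exact absurd hrev.1.symm (ABtoD_ne_dollar d)
          | cons e u1 =>
            simp only [List.map_cons, List.cons_append, List.cons.injEq] at hrev
            obtain ⟨he, hz⟩ := hrev
            have hed : e = d := ABtoD_inj he
            subst hed
            have hz' : ζ = (p.map ABtoD).reverse ++ Dd.dollar :: (u1.map ABtoD).reverse := by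
              have := congrArg List.reverse hz
              simpa using this.symm
            subst hz'
            have ht2 : t2 = ((p ++ [e]).map ABtoD).reverse ++ Dd.dollar :: (u1.map ABtoD).reverse := by
              simp at hq2 ⊢
              simp [hq2]
            subst ht2
            have := ih hfin (p ++ [e]) u1 rfl
            simp [this]
  | tau htr h2 ih =>
      rename_i s t u w
      intro hfin p u0 hs
      subst hs
      obtain ⟨t1, t2⟩ := t
      obtain ⟨h, δ, hd, hq⟩ := htr
      cases hd with
      | mark =>
          obtain ⟨ζ, hqq, hq2⟩ := qstep_data hq
          have hrev := congrArg List.reverse hqq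
          simp at hrev
          cases u0 with
          | cons e u1 =>
            simp only [List.map_cons, List.cons_append, List.cons.injEq] at hrev
            exact absurd hrev.1 (ABtoD_ne_dollar e)
          | nil =>
            simp only [List.map_nil, List.nil_append, List.cons.injEq] at hrev
            replace hrev := hrev.2
            have hz' : ζ = (p.map ABtoD).reverse := by
              have := congrArg List.reverse hrev
              simpa using this.symm
            subst hz'
            have ht2 : t2 = (p.map ABtoD).reverse := by simpa using hq2
            subst ht2
            have := sound2 h2 hfin p rfl
            simp [this]
lemma sound0 : ∀ {c : StDbl × List Dd} {word : List IOAct} {t : StDbl × List Dd},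
    WStep dblQA.proc c word t → dblQA.proc.fin t →
    ∀ w : List AB, c = (StDbl.s0, (w.map ABtoD).reverse) →
      outProj word = (w ++ inProj word) ++ (w ++ inProj word) := by
  intro c word t h
  induction h with
  | refl s =>
      intro hfin w hc
      subst hc
      exact absurd ((fin_iff _).1 hfin) (by simp)
  | act htr h2 ih =>
      rename_i s t u a wd
      intro hfin w0 hs
      subst hs
      obtain ⟨t1, t2⟩ := t
      obtain ⟨h, δ, hd, hq⟩ := htr
      cases hd with
      | read d =>
          have hq' := qstep_star hq
          simp only at hq'
          have ht2 : t2 = ((w0 ++ [d]).map ABtoD).reverse := by simp [hq']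
          subst ht2
          have := ih hfin (w0 ++ [d]) rfl
          simp [this]
      | first d =>
          obtain ⟨ζ, hqq, hq2⟩ := qstep_data hq
          have hrev := congrArg List.reverse hqq
          simp at hrev
          cases w0 with
          | nil => simp at hrev
          | cons e w1 =>
            simp only [List.map_cons, List.cons.injEq] at hrev
            obtain ⟨he, hz⟩ := hrev
            have hed : e = d := ABtoD_inj he
            subst hed
            have hz' : ζ = (w1.map ABtoD).reverse := by
              have := congrArg List.reverse hz
              simpa using this.symm
            subst hz'
            have ht2 : t2 = (([e].map ABtoD)).reverse ++ Dd.dollar :: (w1.map ABtoD).reverse := by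
              simp at hq2 ⊢
              simp [hq2]
            subst ht2
            have hw := sound1 h2 hfin [e] w1 rfl
            subst hw
            simp
      | empty =>
          obtain ⟨hqq, hq2⟩ := qstep_emp hq
          have hw : w0 = [] := by
            cases w0 with
            | nil => rfl
            | cons e w1 => simp at hqq
          subst hw
          have := sound3 h2 rfl
          subst this
          simp
  | tau htr h2 ih =>
      rename_i s t u wd
      intro hfin w0 hs
      subst hs
      obtain ⟨t1, t2⟩ := t
      obtain ⟨h, δ, hd, hq⟩ := htr
      cases hd
lemma dbl_det : dblQA.proc.Deterministic := by
  constructor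
  · rintro ⟨s, q⟩ a ⟨t1, t2⟩ ⟨u1, u2⟩ ⟨h, δ, hd, hq⟩ ⟨h', δ', hd', hq'⟩
    cases hd <;> cases hd' <;> (cases qstep_det hq hq'; rfl)
  · rintro ⟨s, q⟩ ⟨t1, t2⟩ ⟨h, δ, hd, hq⟩ a ⟨u1, u2⟩ ⟨h', δ', hd', hq'⟩
    cases hd with
    | mark =>
        cases hd' with
        | recycle d =>
            obtain ⟨ζ, hqq, -⟩ := qstep_data hq
            obtain ⟨ζ', hqq', -⟩ := qstep_data hq'
            exact ABtoD_ne_dollar d (last_eq (hqq'.symm.trans hqq))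
    | done =>
        cases hd' with
        | second d =>
            obtain ⟨hqq, -⟩ := qstep_emp hq
            obtain ⟨ζ', hqq', -⟩ := qstep_data hq'
            rw [hqq] at hqq'
            simp at hqq'
lemma mk_tr {s : StDbl} {a : Option IOAct} {h : Head Dd} {δ : List Dd} {s' : StDbl}
    {q q' : List Dd} (hd : dblTr s a h δ s') (hq : QStep h δ q q') :
    dblQA.proc.tr (s, q) a (s', q') := ⟨h, δ, hd, hq⟩

lemma wstep_append {S A : Type} {L : LTS S A} {s t u : S} {w1 w2 : List A}
    (h1 : WStep L s w1 t) (h2 : WStep L t w2 u) : WStep L s (w1 ++ w2) u := by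
  induction h1 with
  | refl s => simpa using h2
  | act htr _ ih => exact WStep.act htr (ih h2)
  | tau htr _ ih => exact WStep.tau htr (ih h2)

lemma run_inputs (w : List AB) (q : List Dd) :
    WStep dblQA.proc (StDbl.s0, q) (w.map IOAct.inp) (StDbl.s0, (w.map ABtoD).reverse ++ q) := by
  induction w generalizing q with
  | nil => simpa using WStep.refl (L := dblQA.proc) (StDbl.s0, q)
  | cons d w ih =>
      refine WStep.act (mk_tr (dblTr.read d) (QStep.star [ABtoD d] q)) ?_
      have := ih (ABtoD d :: q)
      have heq : ((w.map ABtoD).reverse ++ (ABtoD d :: q)) = (((d :: w).map ABtoD).reverse ++ q) := by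
        simp
      rw [heq] at this
      exact this

lemma run_s2 (u : List AB) :
    WStep dblQA.proc (StDbl.s2, (u.map ABtoD).reverse) (u.map IOAct.out) (StDbl.s3, []) := by
  induction u with
  | nil =>
      exact WStep.tau (mk_tr dblTr.done (QStep.emp [])) (WStep.refl _)
  | cons d u ih =>
      have hq : QStep (Head.data (ABtoD d)) [] (((d :: u).map ABtoD).reverse) ((u.map ABtoD).reverse) := by
        have := QStep.data (ABtoD d) [] ((u.map ABtoD).reverse)
        simpa using this
      exact WStep.act (mk_tr (dblTr.second d) hq) ih

lemma run_s1 (u p : List AB) :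
    WStep dblQA.proc (StDbl.s1, (p.map ABtoD).reverse ++ Dd.dollar :: (u.map ABtoD).reverse)
      ((u ++ p ++ u).map IOAct.out) (StDbl.s3, []) := by
  induction u generalizing p with
  | nil =>
      have hq : QStep (Head.data Dd.dollar) []
          ((p.map ABtoD).reverse ++ Dd.dollar :: (([] : List AB).map ABtoD).reverse)
          ((p.map ABtoD).reverse) := by
        have := QStep.data Dd.dollar [] ((p.map ABtoD).reverse)
        simpa using this
      have := WStep.tau (L := dblQA.proc) (mk_tr dblTr.mark hq) (run_s2 p)
      simpa using this
  | cons d u ih =>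
      have hq : QStep (Head.data (ABtoD d)) [ABtoD d]
          ((p.map ABtoD).reverse ++ Dd.dollar :: ((d :: u).map ABtoD).reverse)
          (((p ++ [d]).map ABtoD).reverse ++ Dd.dollar :: (u.map ABtoD).reverse) := by
        have := QStep.data (ABtoD d) [ABtoD d]
          ((p.map ABtoD).reverse ++ Dd.dollar :: (u.map ABtoD).reverse)
        simpa using this
      have hstep := WStep.act (L := dblQA.proc) (mk_tr (dblTr.recycle d) hq) (ih (p ++ [d]))
      have hw : (u ++ (p ++ [d]) ++ u).map IOAct.out = ((u ++ p ++ (d :: u)).map IOAct.out) := by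
        simp
      rw [hw] at hstep
      have hw2 : ((d :: u) ++ p ++ (d :: u)).map IOAct.out
          = IOAct.out d :: ((u ++ p ++ (d :: u)).map IOAct.out) := by simp
      rw [hw2]
      exact hstep

lemma run_total (w : List AB) :
    ∃ word ∈ dblQA.proc.lang (dblQA.init, []),
      inProj word = w ∧ outProj word = w ++ w := by
  cases w with
  | nil =>
      refine ⟨[IOAct.oute], ⟨(StDbl.s3, []), ?_, rfl⟩, by simp, by simp⟩
      exact WStep.act (mk_tr dblTr.empty (QStep.emp [])) (WStep.refl _)
  | cons d w =>
      refine ⟨(d :: w).map IOAct.inp ++ IOAct.out d :: ((w ++ [d] ++ w).map IOAct.out),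
        ⟨(StDbl.s3, []), ?_, rfl⟩, by simp, by simp⟩
      refine wstep_append (by have h := run_inputs (d :: w) []; simp at h; exact h) ?_
      have hq : QStep (Head.data (ABtoD d)) [ABtoD d, Dd.dollar]
          ((w.map ABtoD).reverse ++ [ABtoD d])
          (([d].map ABtoD).reverse ++ Dd.dollar :: (w.map ABtoD).reverse) := by
        have := QStep.data (ABtoD d) [ABtoD d, Dd.dollar] ((w.map ABtoD).reverse)
        simpa using this
      exact WStep.act (mk_tr (dblTr.first d) hq) (run_s1 w [d])
/-- The queue automaton of Figure 5 performs a computation and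
computes the doubling function `f(w) = ww` on `{a,b}*`: its process graph is
deterministic, every accepted word has output equal to the double of its
input, and every input `w` yields an accepted word with output `ww`. -/
theorem dblQA_computes_doubling :
    dblQA.proc.Deterministic ∧
    (∀ word ∈ dblQA.proc.lang (dblQA.init, []),
        outProj word = inProj word ++ inProj word) ∧
    (∀ w : List AB, ∃ word ∈ dblQA.proc.lang (dblQA.init, []),
        inProj word = w ∧ outProj word = w ++ w) := by
  refine ⟨dbl_det, ?_, run_total⟩
  rintro word ⟨t, hw, hfin⟩
  simpa using sound0 hw hfin [] rfl
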